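/- Let γ : [a,b] → X be a causal curve in a Lorentzian pre-length space that is a maximizer, i.e., τ(γ(a),γ(b)) = L_τ(γ) < ∞. Then every restriction γ|_{[s,t]} with a ≤ s ≤ t ≤ b is also a maximizer, and for a ≤ s ≤ t ≤ u ≤ b one has τ(γ(s),γ(u)) = τ(γ(s),γ(t)) + τ(γ(t),γ(u)). -/

import Mathlib

open Set

/-- A Lorentzian pre-length space: a set `X` with an extended time separation
function `ell : X × X → {-∞} ∪ [0,∞]` (modelled as `EReal` whose values are either
`⊥ = -∞` or nonnegative) satisfying the reverse triangle inequality (with the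
convention `-∞ + ∞ = -∞`, which is `EReal` addition) and `ell x x ≥ 0`. -/
structure LPLS (X : Type*) where
  ell : X → X → EReal
  range_cond : ∀ x y, ell x y = ⊥ ∨ 0 ≤ ell x y
  rev_tri : ∀ x y z, ell x y + ell y z ≤ ell x z
  refl_nonneg : ∀ x, 0 ≤ ell x x

namespace LPLS

variable {X : Type*}

/-- The causal relation `x ≤ y` iff `ℓ(x,y) ≥ 0`. -/
def causal (L : LPLS X) (x y : X) : Prop := 0 ≤ L.ell x y

/-- The chronological (timelike) relation `x ≪ y` iff `ℓ(x,y) > 0`. -/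
def chron (L : LPLS X) (x y : X) : Prop := 0 < L.ell x y

/-- The time separation function `τ = max(0, ℓ)`. -/
noncomputable def tau (L : LPLS X) (x y : X) : EReal := max 0 (L.ell x y)

/-- The chronological future `I⁺(x)`. -/
def Iplus (L : LPLS X) (x : X) : Set X := {z | L.chron x z}

/-- The chronological past `I⁻(x)`. -/
def Iminus (L : LPLS X) (x : X) : Set X := {z | L.chron z x}

/-- A causal curve on `[a,b]`: continuous and totally ordered by `≤`. -/
def IsCausalCurve [TopologicalSpace X] (L : LPLS X) (γ : ℝ → X) (a b : ℝ) : Prop :=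
  a ≤ b ∧ ContinuousOn γ (Icc a b) ∧
    ∀ ⦃s t : ℝ⦄, s ∈ Icc a b → t ∈ Icc a b → s < t → L.causal (γ s) (γ t)

/-- A timelike curve on `[a,b]`: continuous and totally ordered by `≪`. -/
def IsTimelikeCurve [TopologicalSpace X] (L : LPLS X) (γ : ℝ → X) (a b : ℝ) : Prop :=
  a ≤ b ∧ ContinuousOn γ (Icc a b) ∧
    ∀ ⦃s t : ℝ⦄, s ∈ Icc a b → t ∈ Icc a b → s < t → L.chron (γ s) (γ t)

/-- A curve is null on `[a,b]` if no two of its points are chronologically related. -/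
def IsNullOn (L : LPLS X) (γ : ℝ → X) (a b : ℝ) : Prop :=
  ∀ ⦃s t : ℝ⦄, s ∈ Icc a b → t ∈ Icc a b → s < t → ¬ L.chron (γ s) (γ t)

/-- The `τ`-length of a curve on `[a,b]`:
`L_τ(γ) = inf { Σ τ(γ(t_{i-1}), γ(t_i)) : a = t₀ < t₁ < … < t_N = b }`. -/
noncomputable def len (L : LPLS X) (γ : ℝ → X) (a b : ℝ) : EReal :=
  ⨅ (N : ℕ) (t : Fin (N + 1) → ℝ) (_ : StrictMono t) (_ : t 0 = a)
      (_ : t (Fin.last N) = b),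
    ∑ i : Fin N, L.tau (γ (t i.castSucc)) (γ (t i.succ))

/-- A (causal) maximizer: a causal curve whose length realizes the time separation
of its endpoints. -/
def IsMaximizer [TopologicalSpace X] (L : LPLS X) (γ : ℝ → X) (a b : ℝ) : Prop :=
  L.IsCausalCurve γ a b ∧ L.len γ a b = L.tau (γ a) (γ b)

/-- Regularity: every causal maximizer is either timelike or null. -/
def Regular [TopologicalSpace X] (L : LPLS X) : Prop :=
  ∀ (γ : ℝ → X) (a b : ℝ), a < b → L.IsMaximizer γ a b →
    L.IsTimelikeCurve γ a b ∨ L.IsNullOn γ a b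

/-- The topology is finer than the chronological topology: all `I±(x)` are open. -/
def ChronOpen [TopologicalSpace X] (L : LPLS X) : Prop :=
  ∀ x : X, IsOpen (L.Iplus x) ∧ IsOpen (L.Iminus x)

/-- Locally distinguishing: distinct points are distinguished by their futures or
pasts within every common neighbourhood. -/
def LocallyDistinguishing [TopologicalSpace X] (L : LPLS X) : Prop :=
  ∀ ⦃x y : X⦄, x ≠ y → ∀ U : Set X, U ∈ nhds x → U ∈ nhds y →
    L.Iplus x ∩ U ≠ L.Iplus y ∩ U ∨ L.Iminus x ∩ U ≠ L.Iminus y ∩ U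

/-- Not locally timelike isolating: every neighbourhood of every point meets its
chronological future and past. -/
def NotLocallyIsolating [TopologicalSpace X] (L : LPLS X) : Prop :=
  ∀ x : X, ∀ U ∈ nhds x, (L.Iplus x ∩ U).Nonempty ∧ (L.Iminus x ∩ U).Nonempty

/-- The push-up property. -/
def PushUp (L : LPLS X) : Prop :=
  (∀ ⦃x y z : X⦄, L.chron x y → L.causal y z → L.chron x z) ∧
  (∀ ⦃x y z : X⦄, L.causal x y → L.chron y z → L.chron x z)



lemma ecancel {c x y : EReal} (h0 : 0 ≤ c) (hne : c ≠ ⊤) (h : c + x ≤ c + y) : x ≤ y := by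
  lift c to ℝ using ⟨hne, fun hb => by simp [hb] at h0⟩
  exact EReal.addLECancellable_coe c h

lemma tau_nonneg (L : LPLS X) (x y : X) : 0 ≤ L.tau x y := le_max_left _ _

lemma tau_ne_bot (L : LPLS X) (x y : X) : L.tau x y ≠ ⊥ :=
  fun h => by simpa [h] using L.tau_nonneg x y

lemma tau_eq_ell (L : LPLS X) {x y : X} (h : 0 ≤ L.ell x y) : L.tau x y = L.ell x y :=
  max_eq_right h

lemma causal_trans (L : LPLS X) {x y z : X} (h1 : 0 ≤ L.ell x y) (h2 : 0 ≤ L.ell y z) :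
    0 ≤ L.ell x z :=
  le_trans (by simpa using add_le_add h1 h2) (L.rev_tri x y z)

lemma tau_revtri (L : LPLS X) {x y z : X} (h1 : 0 ≤ L.ell x y) (h2 : 0 ≤ L.ell y z) :
    L.tau x y + L.tau y z ≤ L.tau x z := by
  rw [L.tau_eq_ell h1, L.tau_eq_ell h2, L.tau_eq_ell (L.causal_trans h1 h2)]
  exact L.rev_tri x y z

lemma ell_left_self (L : LPLS X) {x y : X} (h : 0 ≤ L.ell x y) (hne : L.ell x y ≠ ⊤) :
    L.tau x x = 0 := by
  have h1 : L.ell x x + L.ell x y ≤ 0 + L.ell x y := by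
    simpa using L.rev_tri x x y
  rw [add_comm (L.ell x x) _, add_comm (0 : EReal) _] at h1
  have := ecancel h hne h1
  have h2 := L.refl_nonneg x
  rw [tau, le_antisymm this h2]; simp

lemma ell_right_self (L : LPLS X) {x y : X} (h : 0 ≤ L.ell x y) (hne : L.ell x y ≠ ⊤) :
    L.tau y y = 0 := by
  have h1 : L.ell x y + L.ell y y ≤ L.ell x y + 0 := by
    simpa using L.rev_tri x y y
  have := ecancel h hne h1
  have h2 := L.refl_nonneg y
  rw [tau, le_antisymm this h2]; simp

lemma parts_ne_top {x y c : EReal} (hx : 0 ≤ x) (hy : 0 ≤ y) (h : x + y ≤ c) (hc : c ≠ ⊤) :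
    x ≠ ⊤ ∧ y ≠ ⊤ := by
  constructor
  · rintro rfl
    rw [EReal.top_add_of_ne_bot (fun hb => by simp [hb] at hy)] at h
    exact hc (top_le_iff.1 h)
  · rintro rfl
    rw [EReal.add_top_of_ne_bot (fun hb => by simp [hb] at hx)] at h
    exact hc (top_le_iff.1 h)

lemma len_le_sum (L : LPLS X) (γ : ℝ → X) (a b : ℝ) (N : ℕ) (t : Fin (N + 1) → ℝ)
    (hm : StrictMono t) (h0 : t 0 = a) (hl : t (Fin.last N) = b) :
    L.len γ a b ≤ ∑ i : Fin N, L.tau (γ (t i.castSucc)) (γ (t i.succ)) := by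
  exact iInf_le_of_le N (iInf_le_of_le t (iInf_le_of_le hm (iInf_le_of_le h0
    (iInf_le_of_le hl le_rfl))))

lemma len_nonneg (L : LPLS X) (γ : ℝ → X) (a b : ℝ) : 0 ≤ L.len γ a b := by
  refine le_iInf fun N => le_iInf fun t => le_iInf fun _ => le_iInf fun _ => le_iInf fun _ => ?_
  exact Finset.sum_nonneg fun i _ => L.tau_nonneg _ _

lemma len_self (L : LPLS X) (γ : ℝ → X) (a : ℝ) : L.len γ a a = 0 := by
  refine le_antisymm ?_ (L.len_nonneg γ a a)
  have := L.len_le_sum γ a a 0 (fun _ => a)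
    (Fin.strictMono_iff_lt_succ.2 (fun i => i.elim0)) rfl rfl
  simpa using this

lemma len_le_tau (L : LPLS X) (γ : ℝ → X) {a b : ℝ} (h : a < b) :
    L.len γ a b ≤ L.tau (γ a) (γ b) := by
  have := L.len_le_sum γ a b 1 ![a, b] ?_ rfl rfl
  · simpa [Fin.sum_univ_one] using this
  · rw [Fin.strictMono_iff_lt_succ]
    intro i
    fin_cases i
    simpa using h

lemma partition_cons (L : LPLS X) (γ : ℝ → X) {s m : ℝ} (hsm : s < m) (N : ℕ)
    (t : Fin (N + 1) → ℝ) (hm : StrictMono t) (h0 : t 0 = m) :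
    ∃ t' : Fin (N + 2) → ℝ, StrictMono t' ∧ t' 0 = s ∧
      t' (Fin.last (N + 1)) = t (Fin.last N) ∧
      ∑ i : Fin (N + 1), L.tau (γ (t' i.castSucc)) (γ (t' i.succ)) =
        L.tau (γ s) (γ m) + ∑ i : Fin N, L.tau (γ (t i.castSucc)) (γ (t i.succ)) := by
  refine ⟨Fin.cons s t, ?_, rfl, ?_, ?_⟩
  · rw [Fin.strictMono_iff_lt_succ]
    intro i
    induction i using Fin.cases with
    | zero => simpa [h0] using hsm
    | succ j =>
        rw [← Fin.succ_castSucc]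
        simp only [Fin.cons_succ]
        exact hm Fin.castSucc_lt_succ
  · rw [← Fin.succ_last, Fin.cons_succ]
  · rw [Fin.sum_univ_succ]
    congr 1
    · have : L.tau (γ ((Fin.cons s t : Fin (N+2) → ℝ) (Fin.castSucc (0 : Fin (N+1))))) (γ ((Fin.cons s t : Fin (N+2) → ℝ) (Fin.succ (0 : Fin (N+1))))) = L.tau (γ s) (γ m) := by
        rw [Fin.castSucc_zero, Fin.cons_zero, Fin.cons_succ, h0]
      exact this

lemma partition_snoc (L : LPLS X) (γ : ℝ → X) {u : ℝ} (N : ℕ)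
    (t : Fin (N + 1) → ℝ) (hm : StrictMono t) (hlt : t (Fin.last N) < u) :
    ∃ t' : Fin (N + 2) → ℝ, StrictMono t' ∧ t' 0 = t 0 ∧
      t' (Fin.last (N + 1)) = u ∧
      ∑ i : Fin (N + 1), L.tau (γ (t' i.castSucc)) (γ (t' i.succ)) =
        (∑ i : Fin N, L.tau (γ (t i.castSucc)) (γ (t i.succ))) +
          L.tau (γ (t (Fin.last N))) (γ u) := by
  refine ⟨Fin.snoc t u, ?_, ?_, Fin.snoc_last _ _, ?_⟩
  · rw [Fin.strictMono_iff_lt_succ]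
    intro i
    induction i using Fin.lastCases with
    | last =>
        rw [Fin.succ_last, Fin.snoc_castSucc, Fin.snoc_last]
        exact hlt
    | cast j =>
        rw [Fin.succ_castSucc, Fin.snoc_castSucc, Fin.snoc_castSucc]
        exact hm Fin.castSucc_lt_succ
  · have : (Fin.snoc t u : Fin (N+2) → ℝ) (Fin.castSucc (0 : Fin (N+1))) = t 0 := by rw [Fin.snoc_castSucc]
    exact this
  · rw [Fin.sum_univ_castSucc]
    congr 1
    · refine Finset.sum_congr rfl fun j _ => ?_
      rw [Fin.succ_castSucc, Fin.snoc_castSucc, Fin.snoc_castSucc]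
    · rw [Fin.succ_last, Fin.snoc_castSucc, Fin.snoc_last]

lemma strictMono_pair {a b : ℝ} (h : a < b) : StrictMono ![a, b] := by
  rw [Fin.strictMono_iff_lt_succ]
  intro i
  fin_cases i
  simpa using h

end LPLS

/-- restrictions of a maximizer are maximizers, and `τ` is additive
along a maximizer. -/
theorem stmt3 {X : Type*} [TopologicalSpace X] (L : LPLS X) (γ : ℝ → X) (a b : ℝ)
    (hmax : L.IsMaximizer γ a b) (hfin : L.tau (γ a) (γ b) ≠ ⊤) :
    (∀ s t : ℝ, a ≤ s → s ≤ t → t ≤ b → L.IsMaximizer γ s t) ∧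
    (∀ s t u : ℝ, a ≤ s → s ≤ t → t ≤ u → u ≤ b →
      L.tau (γ s) (γ u) = L.tau (γ s) (γ t) + L.tau (γ t) (γ u)) := by
  obtain ⟨⟨hab, hcont, hcaus⟩, hlen⟩ := hmax
  have hamem : a ∈ Icc a b := left_mem_Icc.2 hab
  have hbmem : b ∈ Icc a b := right_mem_Icc.2 hab
  -- tau vanishes on the diagonal along the curve
  have hself : ∀ s ∈ Icc a b, L.tau (γ s) (γ s) = 0 := by
    intro s hs
    rcases eq_or_lt_of_le hab with h | hab'
    · have hsa : s = a := le_antisymm (h ▸ hs.2) hs.1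
      subst hsa
      rw [← h] at hlen
      rw [← hlen, L.len_self]
    · rcases lt_or_eq_of_le hs.2 with hsb | hsb
      · have hc : 0 ≤ L.ell (γ s) (γ b) := hcaus hs hbmem hsb
        have hne : L.ell (γ s) (γ b) ≠ ⊤ := by
          rcases lt_or_eq_of_le hs.1 with has | has
          · have h1 : 0 ≤ L.ell (γ a) (γ s) := hcaus hamem hs has
            have h2 := L.tau_revtri h1 hc
            have h3 := (LPLS.parts_ne_top (L.tau_nonneg _ _) (L.tau_nonneg _ _) h2 hfin).2
            intro htop
            exact h3 (by rw [L.tau_eq_ell hc, htop])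
          · subst has
            intro htop
            exact hfin (by rw [LPLS.tau, htop]; simp)
        exact L.ell_left_self hc hne
      · subst hsb
        have hc : 0 ≤ L.ell (γ a) (γ s) := hcaus hamem hs hab'
        have hne : L.ell (γ a) (γ s) ≠ ⊤ := by
          intro htop
          exact hfin (by rw [LPLS.tau, htop]; simp)
        exact L.ell_right_self hc hne
  -- reverse triangle inequality along the curve
  have hRT : ∀ s t u : ℝ, s ∈ Icc a b → t ∈ Icc a b → u ∈ Icc a b → s ≤ t → t ≤ u →
      L.tau (γ s) (γ t) + L.tau (γ t) (γ u) ≤ L.tau (γ s) (γ u) := by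
    intro s t u hs ht hu hst htu
    rcases eq_or_lt_of_le hst with rfl | hst'
    · rw [hself s hs, zero_add]
    rcases eq_or_lt_of_le htu with rfl | htu'
    · rw [hself t ht, add_zero]
    exact L.tau_revtri (hcaus hs ht hst') (hcaus ht hu htu')
  -- restrictions realize tau
  have hrest : ∀ s t : ℝ, a ≤ s → s ≤ t → t ≤ b → L.len γ s t = L.tau (γ s) (γ t) := by
    intro s t has hst htb
    have hs : s ∈ Icc a b := ⟨has, hst.trans htb⟩
    have ht : t ∈ Icc a b := ⟨has.trans hst, htb⟩
    rcases eq_or_lt_of_le hst with rfl | hst'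
    · rw [L.len_self, hself s hs]
    have hA0 : 0 ≤ L.tau (γ a) (γ s) := L.tau_nonneg _ _
    have hB0 : 0 ≤ L.tau (γ t) (γ b) := L.tau_nonneg _ _
    have hAne : L.tau (γ a) (γ s) ≠ ⊤ :=
      (LPLS.parts_ne_top hA0 (L.tau_nonneg _ _)
        (hRT a s b hamem hs hbmem has (hst.trans htb)) hfin).1
    have hBne : L.tau (γ t) (γ b) ≠ ⊤ :=
      (LPLS.parts_ne_top (L.tau_nonneg _ _) hB0
        (hRT a t b hamem ht hbmem (has.trans hst) htb) hfin).2
    have hkey : (L.tau (γ a) (γ s) + L.tau (γ s) (γ t)) + L.tau (γ t) (γ b)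
        ≤ L.tau (γ a) (γ b) :=
      le_trans (add_le_add_left (hRT a s t hamem hs ht has hst) _)
        (hRT a t b hamem ht hbmem (has.trans hst) htb)
    refine le_antisymm (L.len_le_tau γ hst') ?_
    refine le_iInf fun N => le_iInf fun p => le_iInf fun hmono => le_iInf fun h0 =>
      le_iInf fun hlast => ?_
    obtain ⟨M, q, hqm, hq0, hqlast, hqsum⟩ :
        ∃ (M : ℕ) (q : Fin (M + 1) → ℝ), StrictMono q ∧ q 0 = a ∧ q (Fin.last M) = t ∧
          (∑ i : Fin M, L.tau (γ (q i.castSucc)) (γ (q i.succ))) =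
            L.tau (γ a) (γ s) +
              ∑ i : Fin N, L.tau (γ (p i.castSucc)) (γ (p i.succ)) := by
      rcases eq_or_lt_of_le has with rfl | has'
      · exact ⟨N, p, hmono, h0, hlast, by rw [hself _ hs, zero_add]⟩
      · obtain ⟨t', h1, h2, h3, h4⟩ := L.partition_cons γ has' N p hmono h0
        exact ⟨N + 1, t', h1, h2, by rw [h3, hlast], h4⟩
    obtain ⟨K, r, hrm, hr0, hrlast, hrsum⟩ :
        ∃ (K : ℕ) (r : Fin (K + 1) → ℝ), StrictMono r ∧ r 0 = a ∧ r (Fin.last K) = b ∧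
          (∑ i : Fin K, L.tau (γ (r i.castSucc)) (γ (r i.succ))) =
            (L.tau (γ a) (γ s) +
              ∑ i : Fin N, L.tau (γ (p i.castSucc)) (γ (p i.succ))) +
              L.tau (γ t) (γ b) := by
      rcases eq_or_lt_of_le htb with rfl | htb'
      · exact ⟨M, q, hqm, hq0, hqlast, by rw [hqsum, hself _ ht, add_zero]⟩
      · obtain ⟨t', h1, h2, h3, h4⟩ :=
          L.partition_snoc γ M q hqm (by rw [hqlast]; exact htb')
        exact ⟨M + 1, t', h1, by rw [h2, hq0], h3, by rw [h4, hqsum, hqlast]⟩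
    have h5 : L.tau (γ a) (γ b) ≤
        (L.tau (γ a) (γ s) +
          ∑ i : Fin N, L.tau (γ (p i.castSucc)) (γ (p i.succ))) + L.tau (γ t) (γ b) := by
      rw [← hrsum, ← hlen]
      exact L.len_le_sum γ a b K r hrm hr0 hrlast
    have h6 := hkey.trans h5
    have h7 : L.tau (γ a) (γ s) + L.tau (γ s) (γ t) ≤
        L.tau (γ a) (γ s) + ∑ i : Fin N, L.tau (γ (p i.castSucc)) (γ (p i.succ)) := by
      refine LPLS.ecancel hB0 hBne ?_
      rw [add_comm (L.tau (γ t) (γ b)), add_comm (L.tau (γ t) (γ b))]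
      exact h6
    exact LPLS.ecancel hA0 hAne h7
  constructor
  · intro s t has hst htb
    exact ⟨⟨hst, hcont.mono (Icc_subset_Icc has htb),
      fun u v hu hv huv =>
        hcaus (Icc_subset_Icc has htb hu) (Icc_subset_Icc has htb hv) huv⟩,
      hrest s t has hst htb⟩
  · intro s t u has hst htu hub
    have hs : s ∈ Icc a b := ⟨has, hst.trans (htu.trans hub)⟩
    have ht : t ∈ Icc a b := ⟨has.trans hst, htu.trans hub⟩
    have hu : u ∈ Icc a b := ⟨has.trans (hst.trans htu), hub⟩
    refine le_antisymm ?_ (hRT s t u hs ht hu hst htu)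
    rcases eq_or_lt_of_le hst with rfl | hst'
    · rw [hself s hs, zero_add]
    rcases eq_or_lt_of_le htu with rfl | htu'
    · rw [hself t ht, add_zero]
    rw [← hrest s u has (hst.trans htu) hub]
    obtain ⟨t', h1, h2, h3, h4⟩ :=
      L.partition_cons γ hst' 1 ![t, u] (LPLS.strictMono_pair htu') rfl
    have h4' : (∑ i : Fin (1 + 1), L.tau (γ (t' i.castSucc)) (γ (t' i.succ))) =
        L.tau (γ s) (γ t) + L.tau (γ t) (γ u) := by
      rw [h4]
      norm_num [Fin.sum_univ_one]
    have h3' : t' (Fin.last (1 + 1)) = u := by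
      rw [h3]
      norm_num [Fin.last]
    rw [← h4']
    exact L.len_le_sum γ s u (1 + 1) t' h1 h2 h3'
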